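/- For every integer n ≥ 2, the derivative of the polynomial B_{n+1} at 0 satisfies B'_{n+1}(0) = (-1)^n / ((n-1) · (n-1)!). -/

import Mathlib

open Finset Polynomial

/-- The polynomials `B n ∈ ℚ[X]`: `B 1 = 0` and, for `n ≥ 1`,
`B (n+1) (s) = -(1/n!) ∑_{k=1}^n binom(n,k) (H_n - H_{n-k}) (s-1)^k`. -/
noncomputable def B : ℕ → Polynomial ℚ
  | 0 => 0
  | n + 1 =>
      Polynomial.C (-(n.factorial : ℚ)⁻¹) *
        ∑ k ∈ Finset.Icc 1 n,
          Polynomial.C ((n.choose k : ℚ) * (harmonic n - harmonic (n - k))) *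
            (Polynomial.X - 1) ^ k

lemma stmt7_alt0 (m : ℕ) (hm : 1 ≤ m) :
    ∑ i ∈ range (m+1), (-1:ℚ)^i * (m.choose i) = 0 := by
  have h := @Int.alternating_sum_range_choose m
  rw [if_neg (by omega)] at h
  have := congrArg (fun x : ℤ => (x : ℚ)) h
  push_cast at this
  simpa using this

lemma stmt7_alt1 (m : ℕ) : ∑ j ∈ range (m+1), (-1:ℚ)^j * ((m+1).choose (j+1)) = 1 := by
  have h := stmt7_alt0 (m+1) (by omega)
  rw [Finset.sum_range_succ' _ (m+1)] at h
  simp at h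
  have h1 : ∑ j ∈ range (m+1), (-1:ℚ)^(j+1) * ((m+1).choose (j+1)) = -1 := by linarith
  have h2 : ∑ j ∈ range (m+1), (-1:ℚ)^(j+1) * ((m+1).choose (j+1))
      = - ∑ j ∈ range (m+1), (-1:ℚ)^j * ((m+1).choose (j+1)) := by
    rw [← Finset.sum_neg_distrib]
    exact Finset.sum_congr rfl fun j _ => by ring
  linarith [h2 ▸ h1]

lemma stmt7_L2 (m : ℕ) :
    ∑ j ∈ range (m+1), (-1:ℚ)^j * (m.choose j) / (j+1) = 1/(m+1) := by
  have key : ∀ j : ℕ, (m.choose j : ℚ) / (j+1) = ((m+1).choose (j+1) : ℚ) / (m+1) := by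
    intro j
    have := Nat.add_one_mul_choose_eq m j
    have h : ((m+1 : ℕ) : ℚ) * (m.choose j) = ((m+1).choose (j+1) : ℚ) * (j+1) := by
      exact_mod_cast congrArg (Nat.cast : ℕ → ℚ) this
    field_simp
    push_cast at h ⊢
    linarith
  calc ∑ j ∈ range (m+1), (-1:ℚ)^j * (m.choose j) / (j+1)
      = ∑ j ∈ range (m+1), (-1:ℚ)^j * ((m+1).choose (j+1)) / (m+1) := by
        refine Finset.sum_congr rfl fun j _ => ?_
        rw [mul_div_assoc, key j, mul_div_assoc]
    _ = (∑ j ∈ range (m+1), (-1:ℚ)^j * ((m+1).choose (j+1))) / (m+1) := by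
        rw [Finset.sum_div]
    _ = 1/(m+1) := by rw [stmt7_alt1]

lemma stmt7_L1 (m : ℕ) (hm : 1 ≤ m) :
    ∑ i ∈ range (m+1), (-1:ℚ)^i * (m.choose i) * harmonic i = -1/m := by
  induction m with
  | zero => omega
  | succ m ih =>
    rcases Nat.eq_zero_or_pos m with h0 | hpos
    · subst h0
      simp [Finset.sum_range_succ, harmonic]
    have ihm := ih hpos
    have pascal : ∀ i ∈ range (m+2),
        (-1:ℚ)^i * ((m+1).choose i) * harmonic i
        = (-1:ℚ)^i * (m.choose i) * harmonic i
          + (-1:ℚ)^i * (m.choose (i-1)) * harmonic i := by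
      intro i _
      rcases i with _ | j
      · simp [harmonic]
      · rw [Nat.choose_succ_succ']
        push_cast
        ring
    have first : ∑ i ∈ range (m+2), (-1:ℚ)^i * (m.choose i) * harmonic i
        = ∑ i ∈ range (m+1), (-1:ℚ)^i * (m.choose i) * harmonic i := by
      rw [Finset.sum_range_succ]
      simp [Nat.choose_succ_self]
    have second : ∑ i ∈ range (m+2), (-1:ℚ)^i * (m.choose (i-1)) * harmonic i
        = - (∑ i ∈ range (m+1), (-1:ℚ)^i * (m.choose i) * harmonic i)
          - ∑ j ∈ range (m+1), (-1:ℚ)^j * (m.choose j) / (j+1) := by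
      rw [Finset.sum_range_succ' _ (m+1)]
      have step : ∀ j ∈ range (m+1), (-1:ℚ)^(j+1) * (m.choose j) * harmonic (j+1)
          = -((-1:ℚ)^j * (m.choose j) * harmonic j) - (-1:ℚ)^j * (m.choose j) / (j+1) := by
        intro j _
        rw [harmonic_succ]
        push_cast
        have hj : ((j:ℚ)+1) ≠ 0 := by positivity
        field_simp
        ring
      simp only [Nat.add_sub_cancel]
      rw [Finset.sum_congr rfl step, Finset.sum_sub_distrib, Finset.sum_neg_distrib]
      simp [harmonic]
    rw [Finset.sum_congr rfl pascal, Finset.sum_add_distrib, first, second, ihm, stmt7_L2]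
    have hm0 : (m:ℚ) ≠ 0 := by exact_mod_cast hpos.ne'
    have hm1 : (m:ℚ) + 1 ≠ 0 := by positivity
    push_cast
    field_simp
    ring

lemma stmt7_sum (m : ℕ) :
    ∑ k ∈ Icc 1 (m+2), ((m+2).choose k : ℚ) * (harmonic (m+2) - harmonic (m+2-k))
      * ((k:ℚ) * (-1:ℚ)^(k-1))
    = ((m:ℚ)+2) * (-1)^(m+1) / ((m:ℚ)+1) := by
  rw [← Finset.Ico_add_one_right_eq_Icc, Finset.sum_Ico_eq_sum_range]
  have hrange : m+2+1-1 = m+2 := by omega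
  rw [hrange]
  have step : ∀ j ∈ range (m+2),
      (((m+2).choose (1+j) : ℚ)) * (harmonic (m+2) - harmonic (m+2-(1+j)))
        * (((1+j:ℕ):ℚ) * (-1:ℚ)^(1+j-1))
      = ((m:ℚ)+2) * ((-1:ℚ)^j * (((m+1).choose j :ℚ)) * (harmonic (m+2) - harmonic (m+1-j))) := by
    intro j hj
    have h1 : (1:ℕ)+j-1 = j := by omega
    have h2 : m+2-(1+j) = m+1-j := by omega
    have hc := Nat.add_one_mul_choose_eq (m+1) j
    have hc' : ((m:ℚ)+2) * ((m+1).choose j : ℚ) = ((m+2).choose (j+1) : ℚ) * ((j:ℚ)+1) := by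
      exact_mod_cast congrArg (Nat.cast : ℕ → ℚ) hc
    rw [h1, h2, show 1+j = j+1 from by omega]
    push_cast
    linear_combination -hc' * ((-1:ℚ)^j * (harmonic (m+2) - harmonic (m+1-j)))
  rw [Finset.sum_congr rfl step, ← Finset.mul_sum]
  have split : ∑ j ∈ range (m+2), (-1:ℚ)^j * ((m+1).choose j) * (harmonic (m+2) - harmonic (m+1-j))
      = harmonic (m+2) * (∑ j ∈ range (m+2), (-1:ℚ)^j * ((m+1).choose j))
        - ∑ j ∈ range (m+2), (-1:ℚ)^j * ((m+1).choose j) * harmonic (m+1-j) := by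
    rw [Finset.mul_sum, ← Finset.sum_sub_distrib]
    exact Finset.sum_congr rfl fun j _ => by ring
  rw [split, stmt7_alt0 (m+1) (by omega)]
  have hrefl : ∑ j ∈ range (m+2), (-1:ℚ)^j * ((m+1).choose j) * harmonic (m+1-j)
      = (-1:ℚ)^(m+1) * ∑ i ∈ range (m+2), (-1:ℚ)^i * ((m+1).choose i) * harmonic i := by
    rw [← Finset.sum_range_reflect (fun j => (-1:ℚ)^j * ((m+1).choose j) * harmonic j) (m+2),
      Finset.mul_sum]
    refine Finset.sum_congr rfl fun j hj => ?_
    have hj' : j ≤ m+1 := by simp at hj; omega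
    have e1 : m+2-1-j = m+1-j := by omega
    have e3 : (m+1).choose (m+1-j) = (m+1).choose j := Nat.choose_symm hj'
    have e4 : (-1:ℚ)^(m+1) * (-1:ℚ)^(m+1-j) = (-1:ℚ)^j := by
      rw [← pow_add, show (m+1)+(m+1-j) = 2*(m+1-j)+j from by omega, pow_add, pow_mul]
      norm_num
    rw [e1, e3]
    linear_combination -(((m+1).choose j : ℚ) * harmonic (m+1-j)) * e4
  rw [hrefl, stmt7_L1 (m+1) (by omega)]
  field_simp
  push_cast
  ring

lemma stmt7_eval (n : ℕ) : (derivative (B (n+1))).eval 0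
    = -(n.factorial:ℚ)⁻¹ * ∑ k ∈ Icc 1 n,
        (n.choose k : ℚ) * (harmonic n - harmonic (n-k)) * ((k:ℚ) * (-1:ℚ)^(k-1)) := by
  rw [show B (n+1) = Polynomial.C (-(n.factorial : ℚ)⁻¹) *
        ∑ k ∈ Finset.Icc 1 n,
          Polynomial.C ((n.choose k : ℚ) * (harmonic n - harmonic (n - k))) *
            (Polynomial.X - 1) ^ k from rfl]
  rw [derivative_C_mul, map_sum]
  simp only [derivative_C_mul, derivative_pow, derivative_sub, derivative_X, derivative_one,
    sub_zero, mul_one, eval_mul, eval_C, eval_finset_sum, eval_pow, eval_sub, eval_X, eval_one]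
  rw [Finset.mul_sum, Finset.mul_sum]
  refine Finset.sum_congr rfl fun k hk => ?_
  have h0 : (0:ℚ) - 1 = -1 := by norm_num
  rw [h0]

theorem statement7 (n : ℕ) (hn : 2 ≤ n) :
    (derivative (B (n + 1))).eval 0 = (-1) ^ n / (((n : ℚ) - 1) * ((n - 1).factorial : ℚ)) := by
  obtain ⟨m, rfl⟩ : ∃ m, n = m + 2 := ⟨n - 2, by omega⟩
  rw [stmt7_eval, stmt7_sum]
  have h1 : m + 2 - 1 = m + 1 := by omega
  rw [h1, Nat.factorial_succ (m+1)]
  have hf : ((m+1).factorial : ℚ) ≠ 0 := by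
    exact_mod_cast (m+1).factorial_ne_zero
  have hm1 : (m:ℚ) + 1 ≠ 0 := by positivity
  have hm2 : (m:ℚ) + 2 ≠ 0 := by positivity
  push_cast
  have hFpos : (0:ℚ) < ((m+1).factorial : ℚ) := by
    exact_mod_cast (m+1).factorial_pos
  generalize ((m+1).factorial : ℚ) = F at hFpos ⊢
  have hF : F ≠ 0 := hFpos.ne'
  rw [neg_mul, inv_mul_eq_div, div_div, ← neg_div,
    show (m:ℚ)+2-1 = (m:ℚ)+1 from by ring]
  rw [div_eq_div_iff (by exact mul_ne_zero hm1 (mul_ne_zero (by push_cast; positivity) hF))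
    (mul_ne_zero hm1 hF)]
  ring
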